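/- Let A ∈ ℝ^{m×n} be such that AAᵀ is invertible, let b ∈ ℝ^m, λ > 0, and let S be a linear subspace of ℝ^m. Then z* ∈ S minimizes z ↦ ‖AAᵀz − b‖₂² + λ²‖z‖₂² over S if and only if x* = Aᵀ z* minimizes x ↦ ‖Ax − b‖₂² + λ² ‖(AAᵀ)⁻¹ A x‖₂² over the image subspace AᵀS = {Aᵀz : z ∈ S}. (With S = K_k(AAᵀ, b) and AᵀS = K_k(AᵀA, Aᵀb), this is the characterization of the hybrid AB-GMRES iterate with matched backprojector B = Aᵀ, whose penalty ‖(Aᵀ)†x‖₂ differs from the penalty ‖x‖₂ of hybrid LSQR.) -/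

import Mathlib

open Matrix

/-- The Euclidean norm `‖v‖₂ = sqrt (∑ i, v i ^ 2)` of a real vector. -/
noncomputable def enorm {ι : Type*} [Fintype ι] (v : ι → ℝ) : ℝ :=
  Real.sqrt (∑ i, v i ^ 2)

/-- Characterization of the hybrid AB-GMRES iterate with matched backprojector `B = Aᵀ`:
if `AAᵀ` is invertible and `z* ∈ S`, then `z*` minimizes `z ↦ ‖AAᵀz − b‖₂² + λ²‖z‖₂²`
over the subspace `S ⊆ ℝ^m` iff `x* = Aᵀz*` minimizes
`x ↦ ‖Ax − b‖₂² + λ²‖(AAᵀ)⁻¹Ax‖₂²` over the image subspace `AᵀS`. -/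
theorem stmt_10 (m n : ℕ) (A : Matrix (Fin m) (Fin n) ℝ)
    (hA : IsUnit (A * Aᵀ)) (b : Fin m → ℝ) (lam : ℝ) (hlam : 0 < lam)
    (S : Submodule ℝ (Fin m → ℝ)) (zstar : Fin m → ℝ) (hz : zstar ∈ S) :
    (∀ z ∈ S,
      _root_.enorm ((A * Aᵀ).mulVec zstar - b) ^ 2 + lam ^ 2 * _root_.enorm zstar ^ 2 ≤
        _root_.enorm ((A * Aᵀ).mulVec z - b) ^ 2 + lam ^ 2 * _root_.enorm z ^ 2) ↔
    (∀ x ∈ Submodule.map (Aᵀ).mulVecLin S,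
      _root_.enorm (A.mulVec (Aᵀ.mulVec zstar) - b) ^ 2 +
          lam ^ 2 * _root_.enorm ((A * Aᵀ)⁻¹.mulVec (A.mulVec (Aᵀ.mulVec zstar))) ^ 2 ≤
        _root_.enorm (A.mulVec x - b) ^ 2 +
          lam ^ 2 * _root_.enorm ((A * Aᵀ)⁻¹.mulVec (A.mulVec x)) ^ 2) := by
  have hinv : ∀ z : Fin m → ℝ, (A * Aᵀ)⁻¹.mulVec ((A * Aᵀ).mulVec z) = z := by
    intro z
    rw [Matrix.mulVec_mulVec, Matrix.nonsing_inv_mul _ ((Matrix.isUnit_iff_isUnit_det _).mp hA),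
      Matrix.one_mulVec]
  have key : ∀ z : Fin m → ℝ,
      _root_.enorm (A.mulVec (Aᵀ.mulVec z) - b) ^ 2 +
        lam ^ 2 * _root_.enorm ((A * Aᵀ)⁻¹.mulVec (A.mulVec (Aᵀ.mulVec z))) ^ 2 =
      _root_.enorm ((A * Aᵀ).mulVec z - b) ^ 2 + lam ^ 2 * _root_.enorm z ^ 2 := by
    intro z
    rw [Matrix.mulVec_mulVec, hinv]
  constructor
  · intro h x hx
    obtain ⟨z, hzS, rfl⟩ := hx
    rw [key, Matrix.mulVecLin_apply, key]
    exact h z hzS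
  · intro h z hzS
    have := h (Aᵀ.mulVec z) ⟨z, hzS, rfl⟩
    rwa [key, key] at this
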